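/- Let m ∈ [n] and let B = (b₁ < ⋯ < b_d) be a top set of length d in [n]. Then, as an identity of polynomials, ∑_{1 ≤ i < m} χ_B^{(i m)} = λ_m(B) · χ_B, where χ_B^{(i m)} denotes χ_B with the variables x_i and x_m swapped, and λ_m(B) = i − 2 if b_i = m, and λ_m(B) = m − i if b_{i−1} < m < b_i (with the conventions b₀ = −∞ and b_{d+1} = +∞). -/

import Mathlib

open MvPolynomial

/-- `B : Fin d → Fin n` is a top set if it is strictly increasing and there is a
sequence `A` of `d` distinct elements, disjoint from `B`, with `A i < B i` for all `i`. -/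
def IsTopSet {n d : ℕ} (B : Fin d → Fin n) : Prop :=
  StrictMono B ∧ ∃ A : Fin d → Fin n,
    Function.Injective A ∧ (∀ i j, A i ≠ B j) ∧ ∀ i, A i < B i

/-- `χ_{A,B} = ∏ i (x_{a_i} - x_{b_i})`. -/
noncomputable def chiAB {n d : ℕ} (A B : Fin d → Fin n) : MvPolynomial (Fin n) ℝ :=
  ∏ i, (X (A i) - X (B i))

open Classical in
/-- `χ_B = ∑_{A < B, A disjoint from B} χ_{A,B}`. -/
noncomputable def chiB {n d : ℕ} (B : Fin d → Fin n) : MvPolynomial (Fin n) ℝ :=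
  ∑ A ∈ Finset.univ.filter (fun A : Fin d → Fin n =>
      Function.Injective A ∧ (∀ i j, A i ≠ B j) ∧ ∀ i, A i < B i),
    chiAB A B

open Classical in
noncomputable def Adm {n d : ℕ} (B : Fin d → Fin n) : Finset (Fin d → Fin n) :=
  Finset.univ.filter (fun A : Fin d → Fin n =>
      Function.Injective A ∧ (∀ i j, A i ≠ B j) ∧ ∀ i, A i < B i)

lemma chiB_eq {n d : ℕ} (B : Fin d → Fin n) : chiB B = ∑ A ∈ Adm B, chiAB A B := rfl

lemma mem_Adm {n d : ℕ} {B A : Fin d → Fin n} :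
    A ∈ Adm B ↔ Function.Injective A ∧ (∀ i j, A i ≠ B j) ∧ ∀ i, A i < B i := by
  simp [Adm]

noncomputable def trm {n d : ℕ} (B : Fin d → Fin n) (p i : Fin n) (A : Fin d → Fin n) :
    MvPolynomial (Fin n) ℝ :=
  ∏ j, (X (Equiv.swap i p (A j)) - X (Equiv.swap i p (B j)))

def condE {n d : ℕ} (B : Fin d → Fin n) (p i : Fin n) (A : Fin d → Fin n) : Prop :=
  ∃ m, B m < p ∧ (A m = i ∨ B m = i)

instance condE_dec {n d : ℕ} (B : Fin d → Fin n) (p i : Fin n) (A : Fin d → Fin n) :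
    Decidable (condE B p i A) := by unfold condE; infer_instance

lemma rename_chiB {n d : ℕ} (B : Fin d → Fin n) (p i : Fin n) :
    rename (⇑(Equiv.swap i p)) (chiB B) = ∑ A ∈ Adm B, trm B p i A := by
  rw [chiB_eq, map_sum]
  exact Finset.sum_congr rfl fun A _ => by
    simp only [chiAB, trm, map_prod, map_sub, rename_X]

section helper_lemmas
open Finset

section helpers
variable {R : Type*} [CommRing R] {d : ℕ}

lemma prod_eq_neg_of_off1 (f g : Fin d → R) (m : Fin d)
    (h : ∀ j, j ≠ m → f j = g j) (hm : f m = - g m) :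
    ∏ j, f j = - ∏ j, g j := by
  rw [← Finset.mul_prod_erase Finset.univ f (Finset.mem_univ m),
      ← Finset.mul_prod_erase Finset.univ g (Finset.mem_univ m),
      Finset.prod_congr rfl (fun j hj => h j (Finset.ne_of_mem_erase hj)), hm]
  ring

lemma sum_prod_off1 (f1 f2 g : Fin d → R) (m : Fin d)
    (h1 : ∀ j, j ≠ m → f1 j = g j) (h2 : ∀ j, j ≠ m → f2 j = g j)
    (key : f1 m + f2 m = g m) :
    ∏ j, f1 j + ∏ j, f2 j = ∏ j, g j := by
  rw [← Finset.mul_prod_erase Finset.univ f1 (Finset.mem_univ m),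
      ← Finset.mul_prod_erase Finset.univ f2 (Finset.mem_univ m),
      ← Finset.mul_prod_erase Finset.univ g (Finset.mem_univ m),
      Finset.prod_congr rfl (fun j hj => h1 j (Finset.ne_of_mem_erase hj)),
      Finset.prod_congr rfl (fun j hj => h2 j (Finset.ne_of_mem_erase hj)), ← key]
  ring

lemma sum_prod_off1_neg (f1 f2 : Fin d → R) (m : Fin d)
    (h : ∀ j, j ≠ m → f1 j = f2 j)
    (key : f1 m + f2 m = 0) :
    ∏ j, f1 j + ∏ j, f2 j = 0 := by
  rw [← Finset.mul_prod_erase Finset.univ f1 (Finset.mem_univ m),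
      ← Finset.mul_prod_erase Finset.univ f2 (Finset.mem_univ m),
      Finset.prod_congr rfl (fun j hj => h j (Finset.ne_of_mem_erase hj))]
  have : (f1 m + f2 m) * ∏ j ∈ Finset.univ.erase m, f2 j = 0 := by rw [key]; ring
  linear_combination this

lemma sum_prod_off2 (f1 f2 g : Fin d → R) (m k : Fin d) (hmk : m ≠ k)
    (h1 : ∀ j, j ≠ m → j ≠ k → f1 j = g j) (h2 : ∀ j, j ≠ m → j ≠ k → f2 j = g j)
    (key : f1 m * f1 k + f2 m * f2 k = g m * g k) :
    ∏ j, f1 j + ∏ j, f2 j = ∏ j, g j := by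
  have hk1 : k ∈ Finset.univ.erase m := Finset.mem_erase.2 ⟨hmk.symm, Finset.mem_univ k⟩
  rw [← Finset.mul_prod_erase Finset.univ f1 (Finset.mem_univ m),
      ← Finset.mul_prod_erase Finset.univ f2 (Finset.mem_univ m),
      ← Finset.mul_prod_erase Finset.univ g (Finset.mem_univ m),
      ← Finset.mul_prod_erase _ f1 hk1, ← Finset.mul_prod_erase _ f2 hk1,
      ← Finset.mul_prod_erase _ g hk1]
  have e1 : ∏ j ∈ (Finset.univ.erase m).erase k, f1 j
      = ∏ j ∈ (Finset.univ.erase m).erase k, g j :=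
    Finset.prod_congr rfl fun j hj => by
      obtain ⟨hjk, hj'⟩ := Finset.mem_erase.1 hj
      exact h1 j (Finset.ne_of_mem_erase hj') hjk
  have e2 : ∏ j ∈ (Finset.univ.erase m).erase k, f2 j
      = ∏ j ∈ (Finset.univ.erase m).erase k, g j :=
    Finset.prod_congr rfl fun j hj => by
      obtain ⟨hjk, hj'⟩ := Finset.mem_erase.1 hj
      exact h2 j (Finset.ne_of_mem_erase hj') hjk
  rw [e1, e2]
  linear_combination (∏ j ∈ (Finset.univ.erase m).erase k, g j) * key

lemma sum_prod_off2_neg (f1 f2 : Fin d → R) (m k : Fin d) (hmk : m ≠ k)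
    (h : ∀ j, j ≠ m → j ≠ k → f1 j = f2 j)
    (key : f1 m * f1 k + f2 m * f2 k = 0) :
    ∏ j, f1 j + ∏ j, f2 j = 0 := by
  have hk1 : k ∈ Finset.univ.erase m := Finset.mem_erase.2 ⟨hmk.symm, Finset.mem_univ k⟩
  rw [← Finset.mul_prod_erase Finset.univ f1 (Finset.mem_univ m),
      ← Finset.mul_prod_erase Finset.univ f2 (Finset.mem_univ m),
      ← Finset.mul_prod_erase _ f1 hk1, ← Finset.mul_prod_erase _ f2 hk1]
  have e1 : ∏ j ∈ (Finset.univ.erase m).erase k, f1 j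
      = ∏ j ∈ (Finset.univ.erase m).erase k, f2 j :=
    Finset.prod_congr rfl fun j hj => by
      obtain ⟨hjk, hj'⟩ := Finset.mem_erase.1 hj
      exact h j (Finset.ne_of_mem_erase hj') hjk
  rw [e1]
  linear_combination (∏ j ∈ (Finset.univ.erase m).erase k, f2 j) * key

end helpers

section glue
variable {α β M : Type*} [AddCommMonoid M]

lemma glue_right [DecidableEq α] [DecidableEq β] (s : Finset α) (t : Finset β)
    (P : α × β → Prop) [DecidablePred P] (f : α → β → M) :
    ∑ x ∈ (s ×ˢ t).filter P, f x.1 x.2 = ∑ b ∈ t, ∑ a ∈ s.filter (fun a => P (a, b)), f a b := by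
  rw [Finset.sum_filter, Finset.sum_product_right]
  exact Finset.sum_congr rfl fun b _ => by rw [Finset.sum_filter]

lemma glue_left [DecidableEq α] [DecidableEq β] (s : Finset α) (t : Finset β)
    (P : α × β → Prop) [DecidablePred P] (f : α → β → M) :
    ∑ x ∈ (s ×ˢ t).filter P, f x.1 x.2 = ∑ a ∈ s, ∑ b ∈ t.filter (fun b => P (a, b)), f a b := by
  rw [Finset.sum_filter, Finset.sum_product]
  exact Finset.sum_congr rfl fun a _ => by rw [Finset.sum_filter]

end glue

lemma pair_sum {n d : ℕ} (B : Fin d → Fin n) (hBinj : Function.Injective B) (p : Fin n)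
    (A : Fin d → Fin n) (hA : Function.Injective A) (hdj : ∀ i j, A i ≠ B j)
    (hlt : ∀ i, A i < B i) (m : Fin d) (hm : B m < p) :
    trm B p (A m) A + trm B p (B m) A = chiAB A B := by
  have hAmp : A m ≠ p := ((hlt m).trans hm).ne
  have hBmp : B m ≠ p := hm.ne
  have hABm : A m ≠ B m := hdj m m
  unfold trm chiAB
  by_cases hpA : ∃ k, A k = p
  · obtain ⟨k, hk⟩ := hpA
    have hmk : m ≠ k := fun h => hAmp (h ▸ hk)
    have hpB : ∀ j, B j ≠ p := fun j hj => hdj k j (hk.trans hj.symm)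
    apply sum_prod_off2 _ _ _ m k hmk
    · intro j hjm hjk
      rw [Equiv.swap_apply_of_ne_of_ne (fun h => hjm (hA h))
          (fun h => hjk (hA (h.trans hk.symm))),
        Equiv.swap_apply_of_ne_of_ne (fun h => hdj m j h.symm) (hpB j)]
    · intro j hjm hjk
      rw [Equiv.swap_apply_of_ne_of_ne (hdj j m) (fun h => hjk (hA (h.trans hk.symm))),
        Equiv.swap_apply_of_ne_of_ne (fun h => hjm (hBinj h)) (hpB j)]
    · have e1 : Equiv.swap (A m) p (A m) = p := Equiv.swap_apply_left _ _
      have e2 : Equiv.swap (A m) p (B m) = B m :=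
        Equiv.swap_apply_of_ne_of_ne hABm.symm (hpB m)
      have e3 : Equiv.swap (A m) p (A k) = A m := by rw [hk]; exact Equiv.swap_apply_right _ _
      have e4 : Equiv.swap (A m) p (B k) = B k :=
        Equiv.swap_apply_of_ne_of_ne (fun h => hdj m k h.symm) (hpB k)
      have e5 : Equiv.swap (B m) p (A m) = A m :=
        Equiv.swap_apply_of_ne_of_ne hABm hAmp
      have e6 : Equiv.swap (B m) p (B m) = p := Equiv.swap_apply_left _ _
      have e7 : Equiv.swap (B m) p (A k) = B m := by rw [hk]; exact Equiv.swap_apply_right _ _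
      have e8 : Equiv.swap (B m) p (B k) = B k :=
        Equiv.swap_apply_of_ne_of_ne (fun h => hmk (hBinj h).symm) (hpB k)
      rw [e1, e2, e3, e4, e5, e6, e7, e8, hk]
      ring
  · push_neg at hpA
    by_cases hpB : ∃ k, B k = p
    · obtain ⟨k, hk⟩ := hpB
      have hmk : m ≠ k := fun h => hBmp (h ▸ hk)
      apply sum_prod_off2 _ _ _ m k hmk
      · intro j hjm hjk
        rw [Equiv.swap_apply_of_ne_of_ne (fun h => hjm (hA h)) (hpA j),
          Equiv.swap_apply_of_ne_of_ne (fun h => hdj m j h.symm)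
            (fun h => hjk (hBinj (h.trans hk.symm)))]
      · intro j hjm hjk
        rw [Equiv.swap_apply_of_ne_of_ne (hdj j m) (hpA j),
          Equiv.swap_apply_of_ne_of_ne (fun h => hjm (hBinj h))
            (fun h => hjk (hBinj (h.trans hk.symm)))]
      · have e1 : Equiv.swap (A m) p (A m) = p := Equiv.swap_apply_left _ _
        have e2 : Equiv.swap (A m) p (B m) = B m :=
          Equiv.swap_apply_of_ne_of_ne hABm.symm hBmp
        have e3 : Equiv.swap (A m) p (A k) = A k :=
          Equiv.swap_apply_of_ne_of_ne (fun h => hmk (hA h).symm) (hpA k)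
        have e4 : Equiv.swap (A m) p (B k) = A m := by rw [hk]; exact Equiv.swap_apply_right _ _
        have e5 : Equiv.swap (B m) p (A m) = A m :=
          Equiv.swap_apply_of_ne_of_ne hABm hAmp
        have e6 : Equiv.swap (B m) p (B m) = p := Equiv.swap_apply_left _ _
        have e7 : Equiv.swap (B m) p (A k) = A k :=
          Equiv.swap_apply_of_ne_of_ne (hdj k m) (hpA k)
        have e8 : Equiv.swap (B m) p (B k) = B m := by rw [hk]; exact Equiv.swap_apply_right _ _
        rw [e1, e2, e3, e4, e5, e6, e7, e8, hk]
        ring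
    · push_neg at hpB
      apply sum_prod_off1 _ _ _ m
      · intro j hjm
        rw [Equiv.swap_apply_of_ne_of_ne (fun h => hjm (hA h)) (hpA j),
          Equiv.swap_apply_of_ne_of_ne (fun h => hdj m j h.symm) (hpB j)]
      · intro j hjm
        rw [Equiv.swap_apply_of_ne_of_ne (hdj j m) (hpA j),
          Equiv.swap_apply_of_ne_of_ne (fun h => hjm (hBinj h)) (hpB j)]
      · rw [Equiv.swap_apply_left, Equiv.swap_apply_of_ne_of_ne hABm.symm hBmp,
          Equiv.swap_apply_of_ne_of_ne hABm hAmp, Equiv.swap_apply_left]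
        ring


lemma E_disj {n d : ℕ} {B : Fin d → Fin n} {p : Fin n} {A : Fin d → Fin n}
    (hdj : ∀ i j, A i ≠ B j) :
    Disjoint ((Finset.univ.filter (fun m : Fin d => B m < p)).image A)
      ((Finset.univ.filter (fun m : Fin d => B m < p)).image B) := by
  rw [Finset.disjoint_left]
  rintro x hx hy
  simp only [Finset.mem_image, Finset.mem_filter, Finset.mem_univ, true_and] at hx hy
  obtain ⟨a, -, ha⟩ := hx
  obtain ⟨b, -, hb⟩ := hy
  exact hdj a b (ha.trans hb.symm)

lemma filterE_eq {n d : ℕ} (B : Fin d → Fin n) (p : Fin n) (A : Fin d → Fin n)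
    (hdj : ∀ i j, A i ≠ B j) (hlt : ∀ i, A i < B i) :
    (Finset.univ.filter (fun i : Fin n => i < p)).filter (fun i => condE B p i A)
    = (Finset.univ.filter (fun m : Fin d => B m < p)).image A
      ∪ (Finset.univ.filter (fun m : Fin d => B m < p)).image B := by
  ext i
  simp only [Finset.mem_filter, Finset.mem_union, Finset.mem_image, Finset.mem_univ,
    true_and]
  unfold condE
  constructor
  · rintro ⟨hip, m, hmp, (h | h)⟩
    · exact Or.inl ⟨m, hmp, h⟩
    · exact Or.inr ⟨m, hmp, h⟩
  · rintro (⟨m, hmp, h⟩ | ⟨m, hmp, h⟩)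
    · exact ⟨h ▸ (hlt m).trans hmp, m, hmp, Or.inl h⟩
    · exact ⟨h ▸ hmp, m, hmp, Or.inr h⟩

lemma sumE {n d : ℕ} (B : Fin d → Fin n) (hBinj : Function.Injective B) (p : Fin n)
    (A : Fin d → Fin n) (hA : Function.Injective A) (hdj : ∀ i j, A i ≠ B j)
    (hlt : ∀ i, A i < B i) :
    ∑ i ∈ (Finset.univ.filter (fun i : Fin n => i < p)).filter (fun i => condE B p i A),
        trm B p i A
    = (Finset.univ.filter (fun m : Fin d => B m < p)).card • chiAB A B := by
  rw [filterE_eq B p A hdj hlt, Finset.sum_union (E_disj hdj),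
    Finset.sum_image (fun x _ y _ h => hA h), Finset.sum_image (fun x _ y _ h => hBinj h),
    ← Finset.sum_add_distrib,
    Finset.sum_congr rfl (fun m hm => pair_sum B hBinj p A hA hdj hlt m
      (by simpa using hm))]
  exact Finset.sum_const _

lemma cardE {n d : ℕ} (B : Fin d → Fin n) (hBinj : Function.Injective B) (p : Fin n)
    (A : Fin d → Fin n) (hA : Function.Injective A) (hdj : ∀ i j, A i ≠ B j)
    (hlt : ∀ i, A i < B i) :
    ((Finset.univ.filter (fun i : Fin n => i < p)).filter (fun i => condE B p i A)).card
    = 2 * (Finset.univ.filter (fun m : Fin d => B m < p)).card := by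
  rw [filterE_eq B p A hdj hlt, Finset.card_union_of_disjoint (E_disj hdj),
    Finset.card_image_of_injective _ hA, Finset.card_image_of_injective _ hBinj]
  ring


lemma sumF {n d : ℕ} (B : Fin d → Fin n) (p : Fin n) (hp : ∀ t, B t ≠ p)
    (i : Fin n) (hip : i < p) :
    ∑ A ∈ (Adm B).filter (fun A => ¬ condE B p i A), trm B p i A
    = ∑ A ∈ (Adm B).filter (fun A => ¬ condE B p i A), chiAB A B := by
  have key : ∀ A ∈ (Adm B).filter (fun A => ¬ condE B p i A),
      (⇑(Equiv.swap i p) ∘ A) ∈ (Adm B).filter (fun A => ¬ condE B p i A) := by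
    intro A hA'
    rw [Finset.mem_filter, mem_Adm] at hA'
    obtain ⟨⟨hA, hdj, hlt⟩, hnc⟩ := hA'
    have hiB : ∀ t, B t ≠ i := fun t ht => hnc ⟨t, ht ▸ hip, Or.inr ht⟩
    have hBfix : ∀ t, Equiv.swap i p (B t) = B t := fun t =>
      Equiv.swap_apply_of_ne_of_ne (hiB t) (hp t)
    rw [Finset.mem_filter, mem_Adm]
    refine ⟨⟨(Equiv.swap i p).injective.comp hA, ?_, ?_⟩, ?_⟩
    · intro s t h
      rw [Function.comp_apply, ← hBfix t] at h
      exact hdj s t ((Equiv.swap i p).injective h)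
    · intro t
      rw [Function.comp_apply]
      rcases eq_or_ne (A t) i with h | h
      · rw [h, Equiv.swap_apply_left]
        exact (not_lt.mp fun hc => hnc ⟨t, hc, Or.inl h⟩).lt_of_ne (fun he => hp t he.symm)
      · rcases eq_or_ne (A t) p with h2 | h2
        · rw [h2, Equiv.swap_apply_right]
          exact hip.trans (h2 ▸ hlt t)
        · rw [Equiv.swap_apply_of_ne_of_ne h h2]
          exact hlt t
    · rintro ⟨m, hmp, (h | h)⟩
      · have : A m = p := (Equiv.swap i p).injective
          ((Function.comp_apply .. ▸ h).trans (Equiv.swap_apply_right i p).symm)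
        exact absurd (this ▸ hlt m) (not_lt.mpr hmp.le)
      · exact hiB m h
  refine Finset.sum_nbij' (fun A => ⇑(Equiv.swap i p) ∘ A) (fun A => ⇑(Equiv.swap i p) ∘ A)
    key key ?_ ?_ ?_
  · intro A _; funext t; simp [Equiv.swap_apply_self]
  · intro A _; funext t; simp [Equiv.swap_apply_self]
  · intro A hA'
    rw [Finset.mem_filter, mem_Adm] at hA'
    obtain ⟨⟨hA, hdj, hlt⟩, hnc⟩ := hA'
    have hiB : ∀ t, B t ≠ i := fun t ht => hnc ⟨t, ht ▸ hip, Or.inr ht⟩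
    unfold trm chiAB
    exact Finset.prod_congr rfl fun j _ => by
      rw [Equiv.swap_apply_of_ne_of_ne (hiB j) (hp j)]; rfl


lemma sumG {n d : ℕ} (B : Fin d → Fin n) (hBinj : Function.Injective B) (p : Fin n)
    (jp : Fin d) (hjp : B jp = p) :
    ∑ x ∈ ((Finset.univ.filter (fun i : Fin n => i < p)) ×ˢ Adm B).filter
        (fun x => (¬ condE B p x.1 x.2 ∧ ¬ x.2 jp = x.1) ∧ ¬ ∃ m, p < B m ∧ x.2 m = x.1),
      trm B p x.1 x.2 = 0 := by
  set s := ((Finset.univ.filter (fun i : Fin n => i < p)) ×ˢ Adm B).filter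
      (fun x => (¬ condE B p x.1 x.2 ∧ ¬ x.2 jp = x.1) ∧ ¬ ∃ m, p < B m ∧ x.2 m = x.1)
    with hs
  have mem_s : ∀ i : Fin n, ∀ A : Fin d → Fin n, ((i, A) ∈ s ↔
      (i < p ∧ (Function.Injective A ∧ (∀ s t, A s ≠ B t) ∧ ∀ t, A t < B t)) ∧
      (¬ condE B p i A ∧ ¬ A jp = i) ∧ ¬ ∃ m, p < B m ∧ A m = i) := by
    intro i A
    rw [hs, Finset.mem_filter, Finset.mem_product, Finset.mem_filter, mem_Adm]
    simp
  apply Finset.sum_involution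
    (g := fun (x : Fin n × (Fin d → Fin n)) (_ : x ∈ s) =>
      ((x.2 jp, Function.update x.2 jp x.1) : Fin n × (Fin d → Fin n)))
  case hg₃ =>
    rintro ⟨i, A⟩ hx _
    intro h
    exact (((mem_s i A).mp hx).2.1.2) (congrArg Prod.fst h)
  case g_mem =>
    rintro ⟨i, A⟩ hx
    obtain ⟨⟨hip, hA, hdj, hlt⟩, ⟨hnc, hne⟩, hnH⟩ := (mem_s i A).mp hx
    have hiB : ∀ t, B t ≠ i := fun t ht => hnc ⟨t, ht ▸ hip, Or.inr ht⟩
    have hiA : ∀ t, A t ≠ i := by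
      intro t ht
      rcases lt_trichotomy (B t) p with h | h | h
      · exact hnc ⟨t, h, Or.inl ht⟩
      · exact hne ((hBinj (h.trans hjp.symm)) ▸ ht)
      · exact hnH ⟨t, h, ht⟩
    have hpA : ∀ t, A t ≠ p := fun t ht => hdj t jp (ht.trans hjp.symm)
    show ((A jp, Function.update A jp i) : Fin n × (Fin d → Fin n)) ∈ s
    rw [mem_s]
    refine ⟨⟨hjp ▸ hlt jp, ?_, ?_, ?_⟩, ⟨?_, ?_⟩, ?_⟩
    · intro a b h
      rcases eq_or_ne a jp with ha | ha <;> rcases eq_or_ne b jp with hb | hb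
      · rw [ha, hb]
      · subst ha
        rw [Function.update_self, Function.update_of_ne hb] at h
        exact absurd h.symm (hiA b)
      · subst hb
        rw [Function.update_self, Function.update_of_ne ha] at h
        exact absurd h (hiA a)
      · rw [Function.update_of_ne ha, Function.update_of_ne hb] at h
        exact hA h
    · intro a b
      rcases eq_or_ne a jp with ha | ha
      · subst ha
        rw [Function.update_self]; exact fun h => hiB b h.symm
      · rw [Function.update_of_ne ha]; exact hdj a b
    · intro t
      rcases eq_or_ne t jp with ht | ht
      · subst ht
        rw [Function.update_self, hjp]; exact hip
      · rw [Function.update_of_ne ht]; exact hlt t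
    · rintro ⟨t, htp, (h | h)⟩
      · rcases eq_or_ne t jp with ht | ht
        · subst ht
          rw [Function.update_self] at h
          exact hne h.symm
        · rw [Function.update_of_ne ht] at h
          exact ht (hA h)
      · exact hdj jp t h.symm
    · rw [Function.update_self]
      exact fun h => hne h.symm
    · rintro ⟨t, htp, h⟩
      rcases eq_or_ne t jp with ht | ht
      · subst ht
        exact absurd (hjp ▸ htp) (lt_irrefl p)
      · rw [Function.update_of_ne ht] at h
        exact ht (hA h)
  case hg₄ =>
    rintro ⟨i, A⟩ hx
    obtain ⟨⟨hip, hA, hdj, hlt⟩, ⟨hnc, hne⟩, hnH⟩ := (mem_s i A).mp hx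
    show ((Function.update A jp i jp, Function.update (Function.update A jp i) jp (A jp)) :
        Fin n × (Fin d → Fin n)) = (i, A)
    rw [Function.update_self, Function.update_idem, Function.update_eq_self]
  case hg₁ =>
    rintro ⟨i, A⟩ hx
    obtain ⟨⟨hip, hA, hdj, hlt⟩, ⟨hnc, hne⟩, hnH⟩ := (mem_s i A).mp hx
    have hiB : ∀ t, B t ≠ i := fun t ht => hnc ⟨t, ht ▸ hip, Or.inr ht⟩
    have hiA : ∀ t, A t ≠ i := by
      intro t ht
      rcases lt_trichotomy (B t) p with h | h | h
      · exact hnc ⟨t, h, Or.inl ht⟩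
      · exact hne ((hBinj (h.trans hjp.symm)) ▸ ht)
      · exact hnH ⟨t, h, ht⟩
    have hpA : ∀ t, A t ≠ p := fun t ht => hdj t jp (ht.trans hjp.symm)
    show trm B p i A + trm B p (A jp) (Function.update A jp i) = 0
    unfold trm
    apply sum_prod_off1_neg _ _ jp
    · intro j hj
      rw [Equiv.swap_apply_of_ne_of_ne (hiA j) (hpA j),
        Equiv.swap_apply_of_ne_of_ne (hiB j) (fun h => hj (hBinj (h.trans hjp.symm))),
        Function.update_of_ne hj,
        Equiv.swap_apply_of_ne_of_ne (fun h => hj (hA h)) (hpA j),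
        Equiv.swap_apply_of_ne_of_ne (fun h => hdj jp j h.symm)
          (fun h => hj (hBinj (h.trans hjp.symm)))]
    · rw [Equiv.swap_apply_of_ne_of_ne (hiA jp) (hpA jp), hjp, Equiv.swap_apply_right,
        Function.update_self,
        Equiv.swap_apply_of_ne_of_ne (fun h => hne h.symm) hip.ne, Equiv.swap_apply_right]
      ring

lemma sumH {n d : ℕ} (B : Fin d → Fin n) (hBinj : Function.Injective B) (p : Fin n)
    (jp : Fin d) (hjp : B jp = p) :
    ∑ x ∈ ((Finset.univ.filter (fun i : Fin n => i < p)) ×ˢ Adm B).filter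
        (fun x => (¬ condE B p x.1 x.2 ∧ ¬ x.2 jp = x.1) ∧ ∃ m, p < B m ∧ x.2 m = x.1),
      trm B p x.1 x.2 = 0 := by
  set s := ((Finset.univ.filter (fun i : Fin n => i < p)) ×ˢ Adm B).filter
      (fun x => (¬ condE B p x.1 x.2 ∧ ¬ x.2 jp = x.1) ∧ ∃ m, p < B m ∧ x.2 m = x.1)
    with hs
  have mem_s : ∀ i : Fin n, ∀ A : Fin d → Fin n, ((i, A) ∈ s ↔
      (i < p ∧ (Function.Injective A ∧ (∀ s t, A s ≠ B t) ∧ ∀ t, A t < B t)) ∧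
      (¬ condE B p i A ∧ ¬ A jp = i) ∧ ∃ m, p < B m ∧ A m = i) := by
    intro i A
    rw [hs, Finset.mem_filter, Finset.mem_product, Finset.mem_filter, mem_Adm]
    simp
  apply Finset.sum_involution
    (g := fun (x : Fin n × (Fin d → Fin n)) (_ : x ∈ s) =>
      ((x.2 jp, fun t => if x.2 t = x.1 then x.2 jp else if t = jp then x.1 else x.2 t) :
        Fin n × (Fin d → Fin n)))
  case hg₃ =>
    rintro ⟨i, A⟩ hx _
    intro h
    exact (((mem_s i A).mp hx).2.1.2) (congrArg Prod.fst h)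
  case g_mem =>
    rintro ⟨i, A⟩ hx
    obtain ⟨⟨hip, hA, hdj, hlt⟩, ⟨hnc, hne⟩, m, hpm, hAm⟩ := (mem_s i A).mp hx
    have hmjp : m ≠ jp := fun h => lt_irrefl p (by rw [h, hjp] at hpm; exact hpm)
    have hiB : ∀ t, B t ≠ i := fun t ht => hnc ⟨t, ht ▸ hip, Or.inr ht⟩
    have hpA : ∀ t, A t ≠ p := fun t ht => hdj t jp (ht.trans hjp.symm)
    have hiAjp : i ≠ A jp := fun h => hne h.symm
    have hAti : ∀ t, t ≠ m → A t ≠ i := fun t htm h => htm (hA (h.trans hAm.symm))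
    have hA'm : (if A m = i then A jp else if m = jp then i else A m) = A jp := by
      rw [if_pos hAm]
    have hA'jp : (if A jp = i then A jp else if jp = jp then i else A jp) = i := by
      rw [if_neg hne, if_pos rfl]
    have hA't : ∀ t, t ≠ m → t ≠ jp →
        (if A t = i then A jp else if t = jp then i else A t) = A t := by
      intro t htm htjp
      rw [if_neg (hAti t htm), if_neg htjp]
    have hcomp : (fun t => if A t = i then A jp else if t = jp then i else A t)
        = A ∘ ⇑(Equiv.swap m jp) := by
      funext t
      show (if A t = i then A jp else if t = jp then i else A t) = A (Equiv.swap m jp t)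
      rcases eq_or_ne t m with ht | ht
      · subst ht
        rw [hA'm, Equiv.swap_apply_left]
      · rcases eq_or_ne t jp with ht2 | ht2
        · subst ht2
          rw [hA'jp, Equiv.swap_apply_right, hAm]
        · rw [hA't t ht ht2, Equiv.swap_apply_of_ne_of_ne ht ht2]
    show ((A jp, fun t => if A t = i then A jp else if t = jp then i else A t) :
        Fin n × (Fin d → Fin n)) ∈ s
    rw [mem_s]
    refine ⟨⟨hjp ▸ hlt jp, ?_, ?_, ?_⟩, ⟨?_, ?_⟩, ⟨m, hpm, hA'm⟩⟩
    · rw [hcomp]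
      exact hA.comp (Equiv.swap m jp).injective
    · intro a b
      show (if A a = i then A jp else if a = jp then i else A a) ≠ B b
      rcases eq_or_ne a m with ha | ha
      · subst ha
        rw [hA'm]
        exact hdj jp b
      · rcases eq_or_ne a jp with ha2 | ha2
        · subst ha2
          rw [hA'jp]
          exact fun h => hiB b h.symm
        · rw [hA't a ha ha2]
          exact hdj a b
    · intro t
      show (if A t = i then A jp else if t = jp then i else A t) < B t
      rcases eq_or_ne t m with ht | ht
      · subst ht
        rw [hA'm]
        exact (hjp ▸ hlt jp).trans hpm
      · rcases eq_or_ne t jp with ht2 | ht2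
        · subst ht2
          rw [hA'jp, hjp]
          exact hip
        · rw [hA't t ht ht2]
          exact hlt t
    · rintro ⟨t, htp, (h | h)⟩
      · replace h : (if A t = i then A jp else if t = jp then i else A t) = A jp := h
        rcases eq_or_ne t m with ht | ht
        · subst ht
          exact absurd hpm (not_lt.mpr htp.le)
        · rcases eq_or_ne t jp with ht2 | ht2
          · subst ht2
            rw [hA'jp] at h
            exact hiAjp h
          · rw [hA't t ht ht2] at h
            exact ht2 (hA h)
      · exact hdj jp t h.symm
    · show ¬ (if A jp = i then A jp else if jp = jp then i else A jp) = A jp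
      rw [hA'jp]
      exact fun h => hne h.symm
  case hg₄ =>
    rintro ⟨i, A⟩ hx
    obtain ⟨⟨hip, hA, hdj, hlt⟩, ⟨hnc, hne⟩, m, hpm, hAm⟩ := (mem_s i A).mp hx
    have hiAjp : i ≠ A jp := fun h => hne h.symm
    have hAti : ∀ t, t ≠ m → A t ≠ i := fun t htm h => htm (hA (h.trans hAm.symm))
    dsimp only
    rw [Prod.ext_iff]
    constructor
    · show (if A jp = i then A jp else if jp = jp then i else A jp) = i
      rw [if_neg hne, if_pos rfl]
    · funext t
      show (if (if A t = i then A jp else if t = jp then i else A t) = A jp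
          then (if A jp = i then A jp else if jp = jp then i else A jp)
          else if t = jp then A jp
          else (if A t = i then A jp else if t = jp then i else A t)) = A t
      rcases eq_or_ne t m with ht | ht
      · subst ht
        rw [if_pos hAm, if_pos rfl, if_neg hne, if_pos rfl]
        exact hAm.symm
      · rcases eq_or_ne t jp with ht2 | ht2
        · subst ht2
          rw [if_neg hne, if_pos rfl, if_neg hiAjp, if_pos rfl]
        · rw [if_neg (hAti t ht), if_neg ht2,
            if_neg (show ¬ A t = A jp from fun h => ht2 (hA h)), if_neg ht2]
  case hg₁ =>
    rintro ⟨i, A⟩ hx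
    obtain ⟨⟨hip, hA, hdj, hlt⟩, ⟨hnc, hne⟩, m, hpm, hAm⟩ := (mem_s i A).mp hx
    have hmjp : m ≠ jp := fun h => lt_irrefl p (by rw [h, hjp] at hpm; exact hpm)
    have hiB : ∀ t, B t ≠ i := fun t ht => hnc ⟨t, ht ▸ hip, Or.inr ht⟩
    have hpA : ∀ t, A t ≠ p := fun t ht => hdj t jp (ht.trans hjp.symm)
    have hiAjp : i ≠ A jp := fun h => hne h.symm
    have hAti : ∀ t, t ≠ m → A t ≠ i := fun t htm h => htm (hA (h.trans hAm.symm))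
    have hA'm : (if A m = i then A jp else if m = jp then i else A m) = A jp := by
      rw [if_pos hAm]
    have hA'jp : (if A jp = i then A jp else if jp = jp then i else A jp) = i := by
      rw [if_neg hne, if_pos rfl]
    have hA't : ∀ t, t ≠ m → t ≠ jp →
        (if A t = i then A jp else if t = jp then i else A t) = A t := by
      intro t htm htjp
      rw [if_neg (hAti t htm), if_neg htjp]
    show trm B p i A + trm B p (A jp)
        (fun t => if A t = i then A jp else if t = jp then i else A t) = 0
    unfold trm
    apply sum_prod_off2_neg _ _ m jp hmjp
    · intro j hjm hjjp
      show X (Equiv.swap i p (A j)) - X (Equiv.swap i p (B j))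
          = X (Equiv.swap (A jp) p (if A j = i then A jp else if j = jp then i else A j))
            - X (Equiv.swap (A jp) p (B j))
      rw [hA't j hjm hjjp,
        Equiv.swap_apply_of_ne_of_ne (hAti j hjm) (hpA j),
        Equiv.swap_apply_of_ne_of_ne (hiB j) (fun h => hjjp (hBinj (h.trans hjp.symm))),
        Equiv.swap_apply_of_ne_of_ne (fun h => hjjp (hA h)) (hpA j),
        Equiv.swap_apply_of_ne_of_ne (fun h => hdj jp j h.symm)
          (fun h => hjjp (hBinj (h.trans hjp.symm)))]
    · show (X (Equiv.swap i p (A m)) - X (Equiv.swap i p (B m))) *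
          (X (Equiv.swap i p (A jp)) - X (Equiv.swap i p (B jp)))
        + (X (Equiv.swap (A jp) p (if A m = i then A jp else if m = jp then i else A m))
            - X (Equiv.swap (A jp) p (B m))) *
          (X (Equiv.swap (A jp) p (if A jp = i then A jp else if jp = jp then i else A jp))
            - X (Equiv.swap (A jp) p (B jp))) = 0
      rw [hA'm, hA'jp, hAm, Equiv.swap_apply_left,
        Equiv.swap_apply_of_ne_of_ne (hiB m) hpm.ne',
        Equiv.swap_apply_of_ne_of_ne hne (hpA jp), hjp, Equiv.swap_apply_right,
        Equiv.swap_apply_left,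
        Equiv.swap_apply_of_ne_of_ne (fun h => hdj jp m h.symm) hpm.ne',
        Equiv.swap_apply_of_ne_of_ne hiAjp hip.ne, Equiv.swap_apply_right]
      ring

end helper_lemmas

section more_helpers
open Finset

lemma trm_Hc {n d : ℕ} (B : Fin d → Fin n) (hBinj : Function.Injective B) (p : Fin n)
    (jp : Fin d) (hjp : B jp = p) (A : Fin d → Fin n) (hA : Function.Injective A)
    (hdj : ∀ i j, A i ≠ B j) :
    trm B p (A jp) A = - chiAB A B := by
  unfold trm chiAB
  apply prod_eq_neg_of_off1 _ _ jp
  · intro j hj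
    rw [Equiv.swap_apply_of_ne_of_ne (fun h => hj (hA h))
        (fun h => hdj j jp (h.trans hjp.symm)),
      Equiv.swap_apply_of_ne_of_ne (fun h => hdj jp j h.symm)
        (fun h => hj (hBinj (h.trans hjp.symm)))]
  · rw [Equiv.swap_apply_left, hjp, Equiv.swap_apply_right]
    ring

lemma fiber_Hc {n d : ℕ} (B : Fin d → Fin n) (hBinj : Function.Injective B) (p : Fin n)
    (jp : Fin d) (hjp : B jp = p) (A : Fin d → Fin n) (hA : Function.Injective A)
    (hdj : ∀ i j, A i ≠ B j) (hlt : ∀ i, A i < B i) :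
    (Finset.univ.filter (fun i : Fin n => i < p)).filter
      (fun i => ¬ condE B p i A ∧ A jp = i) = {A jp} := by
  ext i
  simp only [Finset.mem_filter, Finset.mem_univ, true_and, Finset.mem_singleton]
  constructor
  · rintro ⟨-, -, h⟩
    exact h.symm
  · rintro rfl
    refine ⟨hjp ▸ hlt jp, ?_, rfl⟩
    rintro ⟨t, htp, (h | h)⟩
    · have ht : t = jp := hA h
      rw [ht, hjp] at htp
      exact lt_irrefl p htp
    · exact hdj jp t h.symm

lemma card_Ip {n : ℕ} (p : Fin n) :
    (Finset.univ.filter (fun i : Fin n => i < p)).card = (p : ℕ) := by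
  have h : (Finset.univ.filter (fun i : Fin n => i < p)) = Finset.Iio p := by
    ext x; simp
  rw [h]
  simp

end more_helpers

lemma split3 {α γ : Type*} [AddCommMonoid γ] (s : Finset α) (P Q R : α → Prop)
    [DecidablePred P] [DecidablePred Q] [DecidablePred R] (f : α → γ) :
    ∑ x ∈ s.filter (fun x => ¬ P x), f x
      = ∑ x ∈ s.filter (fun x => ¬ P x ∧ Q x), f x
        + (∑ x ∈ s.filter (fun x => (¬ P x ∧ ¬ Q x) ∧ R x), f x
          + ∑ x ∈ s.filter (fun x => (¬ P x ∧ ¬ Q x) ∧ ¬ R x), f x) := by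
  rw [← Finset.sum_filter_add_sum_filter_not (s.filter (fun x => ¬ P x)) Q f,
    Finset.filter_filter, Finset.filter_filter,
    ← Finset.sum_filter_add_sum_filter_not
      (s.filter (fun x => ¬ P x ∧ ¬ Q x)) R f,
    Finset.filter_filter, Finset.filter_filter]

open Classical in
/-- `∑_{1 ≤ i < m} χ_B^{(i m)} = λ_m(B) χ_B`, where (0-based, the variable `m` being
`p`, so the paper's 1-based `m` is `(p : ℕ) + 1`): if `p ∈ B`, say `B j = p`, then
`λ_m(B) = i - 2` for the 1-based position `i = (j : ℕ) + 1`; since `B` is increasing,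
`(j : ℕ)` is the number of entries of `B` below `p`, so `λ_m(B) = #{j : B j < p} - 1`;
and if `p ∉ B` then `λ_m(B) = m - i = (p : ℕ) - #{j : B j < p}`. -/
theorem chiB_transposition_sum {n d : ℕ} (B : Fin d → Fin n) (hB : IsTopSet B)
    (p : Fin n) :
    ∑ i ∈ Finset.univ.filter (fun i : Fin n => i < p),
        MvPolynomial.rename (⇑(Equiv.swap i p)) (chiB B)
      = (if p ∈ Set.range B
          then ((Finset.univ.filter (fun j : Fin d => B j < p)).card : ℝ) - 1
          else ((p : ℕ) : ℝ) -
            ((Finset.univ.filter (fun j : Fin d => B j < p)).card : ℝ)) • chiB B := by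
  obtain ⟨hmono, -⟩ := hB
  have hBinj : Function.Injective B := hmono.injective
  rw [Finset.sum_congr rfl (fun i _ => rename_chiB B p i)]
  rw [← Finset.sum_product']
  rw [← Finset.sum_filter_add_sum_filter_not
    ((Finset.univ.filter (fun i : Fin n => i < p)) ×ˢ Adm B)
    (fun x => condE B p x.1 x.2) (fun x => trm B p x.1 x.2)]
  have hE : ∑ x ∈ ((Finset.univ.filter (fun i : Fin n => i < p)) ×ˢ Adm B).filter
        (fun x => condE B p x.1 x.2), trm B p x.1 x.2
      = ((Finset.univ.filter (fun j : Fin d => B j < p)).card) • chiB B := by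
    have e1 : ∑ x ∈ ((Finset.univ.filter (fun i : Fin n => i < p)) ×ˢ Adm B).filter
          (fun x => condE B p x.1 x.2), trm B p x.1 x.2
        = ∑ A ∈ Adm B, ∑ i ∈ (Finset.univ.filter (fun i : Fin n => i < p)).filter
            (fun i => condE B p i A), trm B p i A :=
      glue_right _ _ _ _
    have e2 : ∑ A ∈ Adm B, ∑ i ∈ (Finset.univ.filter (fun i : Fin n => i < p)).filter
          (fun i => condE B p i A), trm B p i A
        = ∑ A ∈ Adm B, ((Finset.univ.filter (fun j : Fin d => B j < p)).card) • chiAB A B :=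
      Finset.sum_congr rfl (fun A hA' => by
        rw [mem_Adm] at hA'
        exact sumE B hBinj p A hA'.1 hA'.2.1 hA'.2.2)
    rw [e1, e2, chiB_eq, Finset.smul_sum]
  rw [hE]
  by_cases hp : p ∈ Set.range B
  · rw [if_pos hp]
    obtain ⟨jp, hjp⟩ := hp
    rw [split3 ((Finset.univ.filter (fun i : Fin n => i < p)) ×ˢ Adm B)
      (fun x => condE B p x.1 x.2) (fun x => x.2 jp = x.1)
      (fun x => ∃ m, p < B m ∧ x.2 m = x.1) (fun x => trm B p x.1 x.2)]
    rw [sumH B hBinj p jp hjp, sumG B hBinj p jp hjp]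
    have hHc : ∑ x ∈ ((Finset.univ.filter (fun i : Fin n => i < p)) ×ˢ Adm B).filter
          (fun x => ¬ condE B p x.1 x.2 ∧ x.2 jp = x.1), trm B p x.1 x.2
        = - chiB B := by
      have e1 : ∑ x ∈ ((Finset.univ.filter (fun i : Fin n => i < p)) ×ˢ Adm B).filter
            (fun x => ¬ condE B p x.1 x.2 ∧ x.2 jp = x.1), trm B p x.1 x.2
          = ∑ A ∈ Adm B, ∑ i ∈ (Finset.univ.filter (fun i : Fin n => i < p)).filter
              (fun i => ¬ condE B p i A ∧ A jp = i), trm B p i A :=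
        glue_right _ _ _ _
      have e2 : ∑ A ∈ Adm B, ∑ i ∈ (Finset.univ.filter (fun i : Fin n => i < p)).filter
            (fun i => ¬ condE B p i A ∧ A jp = i), trm B p i A
          = ∑ A ∈ Adm B, - chiAB A B :=
        Finset.sum_congr rfl (fun A hA' => by
          rw [mem_Adm] at hA'
          rw [fiber_Hc B hBinj p jp hjp A hA'.1 hA'.2.1 hA'.2.2, Finset.sum_singleton,
            trm_Hc B hBinj p jp hjp A hA'.1 hA'.2.1])
      rw [e1, e2, Finset.sum_neg_distrib, chiB_eq]
    rw [hHc, sub_smul, one_smul, Nat.cast_smul_eq_nsmul]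
    abel
  · rw [if_neg hp]
    have hp' : ∀ t, B t ≠ p := fun t ht => hp ⟨t, ht⟩
    have hF : ∑ x ∈ ((Finset.univ.filter (fun i : Fin n => i < p)) ×ˢ Adm B).filter
          (fun x => ¬ condE B p x.1 x.2), trm B p x.1 x.2
        = ∑ A ∈ Adm B, ((Finset.univ.filter (fun i : Fin n => i < p)).filter
            (fun i => ¬ condE B p i A)).card • chiAB A B := by
      have e1 : ∑ x ∈ ((Finset.univ.filter (fun i : Fin n => i < p)) ×ˢ Adm B).filter
            (fun x => ¬ condE B p x.1 x.2), trm B p x.1 x.2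
          = ∑ i ∈ (Finset.univ.filter (fun i : Fin n => i < p)),
              ∑ A ∈ (Adm B).filter (fun A => ¬ condE B p i A), trm B p i A :=
        glue_left _ _ _ _
      have e1b : ∑ i ∈ (Finset.univ.filter (fun i : Fin n => i < p)),
            ∑ A ∈ (Adm B).filter (fun A => ¬ condE B p i A), trm B p i A
          = ∑ i ∈ (Finset.univ.filter (fun i : Fin n => i < p)),
            ∑ A ∈ (Adm B).filter (fun A => ¬ condE B p i A), chiAB A B :=
        Finset.sum_congr rfl (fun i hi => sumF B p hp' i (by simpa using hi))
      have e2 : ∑ i ∈ (Finset.univ.filter (fun i : Fin n => i < p)),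
            ∑ A ∈ (Adm B).filter (fun A => ¬ condE B p i A), chiAB A B
          = ∑ x ∈ ((Finset.univ.filter (fun i : Fin n => i < p)) ×ˢ Adm B).filter
            (fun x => ¬ condE B p x.1 x.2), chiAB x.2 B :=
        (glue_left (P := fun x => ¬ condE B p x.1 x.2)
          (f := fun (_ : Fin n) (A : Fin d → Fin n) => chiAB A B)
          (Finset.univ.filter (fun i : Fin n => i < p)) (Adm B)).symm
      have e3 : ∑ x ∈ ((Finset.univ.filter (fun i : Fin n => i < p)) ×ˢ Adm B).filter
            (fun x => ¬ condE B p x.1 x.2), chiAB x.2 B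
          = ∑ A ∈ Adm B, ∑ i ∈ (Finset.univ.filter (fun i : Fin n => i < p)).filter
              (fun i => ¬ condE B p i A), chiAB A B :=
        glue_right (P := fun x => ¬ condE B p x.1 x.2)
          (f := fun (_ : Fin n) (A : Fin d → Fin n) => chiAB A B)
          (Finset.univ.filter (fun i : Fin n => i < p)) (Adm B)
      rw [e1, e1b, e2, e3]
      exact Finset.sum_congr rfl fun A _ => Finset.sum_const _
    rw [hF, chiB_eq, Finset.smul_sum, Finset.smul_sum, ← Finset.sum_add_distrib]
    refine Finset.sum_congr rfl fun A hA' => ?_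
    rw [mem_Adm] at hA'
    have hc2 : ((Finset.univ.filter (fun i : Fin n => i < p)).filter
          (fun i => condE B p i A)).card
        = 2 * (Finset.univ.filter (fun j : Fin d => B j < p)).card :=
      cardE B hBinj p A hA'.1 hA'.2.1 hA'.2.2
    have hcc : ((Finset.univ.filter (fun i : Fin n => i < p)).filter
          (fun i => condE B p i A)).card
        + ((Finset.univ.filter (fun i : Fin n => i < p)).filter
          (fun i => ¬ condE B p i A)).card = (p : ℕ) := by
      rw [Finset.card_filter_add_card_filter_not, card_Ip]
    rw [← Nat.cast_smul_eq_nsmul ℝ, ← Nat.cast_smul_eq_nsmul ℝ, ← add_smul]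
    congr 1
    rw [hc2] at hcc
    have hcast := congrArg (fun k : ℕ => (k : ℝ)) hcc
    push_cast at hcast
    linarith
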